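/- Let d ≥ 2, k > 2, and let b₂ : [−1,1] → [0,∞) be measurable and even with ‖b₂‖ := ∫_{S^{d−1}} b₂(e·ω) dω < ∞. Suppose α ∈ [0, ‖b₂‖] satisfies ∫_{S^{d−1}} b₂(û·ω)(⟨v'⟩^k + ⟨v₁'⟩^k) dω ≤ α (⟨v⟩² + ⟨v₁⟩²)^{k/2} for all v ≠ v₁ in ℝ^d. Define K(v,v₁) = ∫_{S^{d−1}} b₂(û·ω)(⟨v'⟩^k + ⟨v₁'⟩^k − ⟨v⟩^k − ⟨v₁⟩^k) dω. Then there exists a constant C_k > 1, depending only on k, and functions G̃, L̃ defined on pairs (v,v₁) with v ≠ v₁, such that K = G̃ − L̃, 0 ≤ G̃(v,v₁) ≤ α C_k ⟨v⟩⟨v₁⟩(⟨v⟩^{k−2} + ⟨v₁⟩^{k−2}), and L̃(v,v₁) ≥ (‖b₂‖ − α)(⟨v⟩^k + ⟨v₁⟩^k). -/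

import Mathlib

open MeasureTheory
open scoped RealInnerProductSpace

/-- The "Japanese bracket" `⟨v⟩ = √(1 + |v|²)`. -/
noncomputable def jap {d : ℕ} (v : EuclideanSpace ℝ (Fin d)) : ℝ := Real.sqrt (1 + ‖v‖ ^ 2)

/-- The surface measure on the unit sphere `S^{d−1} ⊂ ℝ^d`. -/
noncomputable def sphereMeasure (d : ℕ) :
    Measure (Metric.sphere (0 : EuclideanSpace ℝ (Fin d)) 1) :=
  (volume : Measure (EuclideanSpace ℝ (Fin d))).toSphere

/-- `v' = v + ((v₁−v)·ω)ω`. -/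
noncomputable def vPrime {d : ℕ} (v v₁ ω : EuclideanSpace ℝ (Fin d)) :
    EuclideanSpace ℝ (Fin d) := v + ⟪v₁ - v, ω⟫ • ω

/-- `v₁' = v₁ − ((v₁−v)·ω)ω`. -/
noncomputable def v1Prime {d : ℕ} (v v₁ ω : EuclideanSpace ℝ (Fin d)) :
    EuclideanSpace ℝ (Fin d) := v₁ - ⟪v₁ - v, ω⟫ • ω

lemma aux_pow (n : ℕ) : ∀ s : ℝ, 0 ≤ s → s ≤ 1 → (1+s)^n ≤ 1 + ((2:ℝ)^n - 1)*s := by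
  induction n with
  | zero => intro s h0 h1; simp
  | succ n ih =>
      intro s h0 h1
      have h := ih s h0 h1
      have h2 : (0:ℝ) ≤ (2:ℝ)^n - 1 := by
        have : (1:ℝ) ≤ 2^n := one_le_pow₀ (by norm_num)
        linarith
      calc (1+s)^(n+1) = (1+s)^n * (1+s) := by ring
        _ ≤ (1 + ((2:ℝ)^n - 1)*s) * (1+s) := by
            apply mul_le_mul_of_nonneg_right h (by linarith)
        _ ≤ 1 + ((2:ℝ)^(n+1) - 1)*s := by
            nlinarith [mul_nonneg h2 (by nlinarith : (0:ℝ) ≤ s - s*s), pow_succ (2:ℝ) n]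

lemma key_asym (k : ℝ) (hk : 2 < k) (a b : ℝ) (hb : 1 ≤ b) (hba : b ≤ a) :
    (a^2 + b^2) ^ (k/2) ≤ a^k + b^k + (2:ℝ)^(⌈k/2⌉₊) * (a*b) * (a^(k-2) + b^(k-2)) := by
  have ha : (1:ℝ) ≤ a := le_trans hb hba
  have ha0 : (0:ℝ) < a := by linarith
  have hb0 : (0:ℝ) < b := by linarith
  set s : ℝ := b / a with hs
  have hs0 : 0 ≤ s := by positivity
  have hs1 : s ≤ 1 := by rw [hs, div_le_one ha0]; exact hba
  have h1 : a^2 + b^2 ≤ a^2 * (1+s) := by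
    have : a^2 * (1+s) = a^2 + a*b := by field_simp [hs]; rw [hs]; field_simp
    nlinarith
  have h2 : (a^2 + b^2)^(k/2) ≤ (a^2 * (1+s))^(k/2) :=
    Real.rpow_le_rpow (by positivity) h1 (by positivity)
  have h3 : (a^2 * (1+s))^(k/2) = (a^2)^(k/2) * (1+s)^(k/2) :=
    Real.mul_rpow (by positivity) (by linarith)
  have h4 : (a^2 : ℝ)^(k/2) = a^k := by
    rw [← Real.rpow_natCast a 2, ← Real.rpow_mul ha0.le]
    congr 1
    push_cast
    ring
  have h5 : (1+s)^(k/2) ≤ (1+s)^(⌈k/2⌉₊ : ℕ) := by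
    rw [← Real.rpow_natCast (1+s) ⌈k/2⌉₊]
    exact Real.rpow_le_rpow_of_exponent_le (by linarith) (Nat.le_ceil _)
  have h6 := aux_pow ⌈k/2⌉₊ s hs0 hs1
  set C : ℝ := (2:ℝ)^(⌈k/2⌉₊) with hC
  have hC1 : (1:ℝ) ≤ C := one_le_pow₀ (by norm_num)
  have h7 : (1+s)^(k/2) ≤ 1 + (C-1)*s := le_trans h5 (by exact_mod_cast h6)
  have h8 : (a^2+b^2)^(k/2) ≤ a^k * (1 + (C-1)*s) := by
    calc (a^2+b^2)^(k/2) ≤ (a^2)^(k/2) * (1+s)^(k/2) := by rw [← h3]; exact h2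
      _ ≤ (a^2)^(k/2) * (1 + (C-1)*s) := by
          apply mul_le_mul_of_nonneg_left h7 (by positivity)
      _ = a^k * (1 + (C-1)*s) := by rw [h4]
  have h9 : a^k * s = (a*b) * a^(k-2) := by
    have : a^k = a^(k-2) * a^(2:ℝ) := by
      rw [← Real.rpow_add ha0]; ring_nf
    rw [this, hs]
    rw [Real.rpow_two]
    field_simp
  have hak : 0 ≤ a^(k-2) := by positivity
  have hbk : 0 ≤ b^(k-2) := by positivity
  have hbk' : 0 ≤ b^k := by positivity
  have hCab : 0 ≤ C * (a*b) := by positivity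
  nlinarith [h8, h9, mul_nonneg (mul_nonneg (by positivity : (0:ℝ) ≤ C) (by positivity : (0:ℝ) ≤ a*b)) hbk, mul_nonneg (by positivity : (0:ℝ) ≤ a*b) hak]

lemma key_sym (k : ℝ) (hk : 2 < k) (a b : ℝ) (ha : 1 ≤ a) (hb : 1 ≤ b) :
    (a^2 + b^2) ^ (k/2) ≤ a^k + b^k + (2:ℝ)^(⌈k/2⌉₊) * (a*b) * (a^(k-2) + b^(k-2)) := by
  rcases le_total b a with h | h
  · exact key_asym k hk a b hb h
  · have := key_asym k hk b a ha h
    have e1 : b^2 + a^2 = a^2 + b^2 := by ring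
    rw [e1] at this
    linarith

lemma jap_one_le {d : ℕ} (v : EuclideanSpace ℝ (Fin d)) : 1 ≤ jap v := by
  rw [jap]
  calc (1:ℝ) = Real.sqrt 1 := by simp
    _ ≤ Real.sqrt (1 + ‖v‖ ^ 2) := Real.sqrt_le_sqrt (le_add_of_nonneg_right (sq_nonneg _))

lemma jap_sq {d : ℕ} (v : EuclideanSpace ℝ (Fin d)) : jap v ^ 2 = 1 + ‖v‖ ^ 2 :=
  Real.sq_sqrt (by positivity)

lemma energy {d : ℕ} (v v₁ ω : EuclideanSpace ℝ (Fin d)) (hω : ‖ω‖ = 1) :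
    jap (vPrime v v₁ ω) ^ 2 + jap (v1Prime v v₁ ω) ^ 2 = jap v ^ 2 + jap v₁ ^ 2 := by
  rw [jap_sq, jap_sq, jap_sq, jap_sq, vPrime, v1Prime]
  have h1 : ‖v + ⟪v₁ - v, ω⟫ • ω‖ ^ 2
      = ‖v‖^2 + 2 * ⟪v, ⟪v₁ - v, ω⟫ • ω⟫ + ‖⟪v₁ - v, ω⟫ • ω‖^2 := norm_add_sq_real _ _
  have h2 : ‖v₁ - ⟪v₁ - v, ω⟫ • ω‖ ^ 2
      = ‖v₁‖^2 - 2 * ⟪v₁, ⟪v₁ - v, ω⟫ • ω⟫ + ‖⟪v₁ - v, ω⟫ • ω‖^2 := norm_sub_sq_real _ _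
  have h3 : ⟪v, ⟪v₁ - v, ω⟫ • ω⟫ = ⟪v₁ - v, ω⟫ * ⟪v, ω⟫ := real_inner_smul_right _ _ _
  have h4 : ⟪v₁, ⟪v₁ - v, ω⟫ • ω⟫ = ⟪v₁ - v, ω⟫ * ⟪v₁, ω⟫ := real_inner_smul_right _ _ _
  have h5 : ‖⟪v₁ - v, ω⟫ • ω‖^2 = ⟪v₁ - v, ω⟫^2 := by
    rw [norm_smul, hω]; simp [sq_abs]
  have h6 : ⟪v₁ - v, ω⟫ = ⟪v₁, ω⟫ - ⟪v, ω⟫ := inner_sub_left _ _ _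
  rw [h1, h2, h3, h4, h5, h6]
  ring

lemma pointwise_bound {d : ℕ} (k : ℝ) (hk : 2 < k) (v v₁ ω : EuclideanSpace ℝ (Fin d))
    (hω : ‖ω‖ = 1) :
    jap (vPrime v v₁ ω) ^ k + jap (v1Prime v v₁ ω) ^ k ≤ (jap v ^ 2 + jap v₁ ^ 2) ^ (k/2) := by
  have hx : (0:ℝ) ≤ jap (vPrime v v₁ ω) := le_trans zero_le_one (jap_one_le _)
  have hy : (0:ℝ) ≤ jap (v1Prime v v₁ ω) := le_trans zero_le_one (jap_one_le _)
  have key : ∀ x : ℝ, 0 ≤ x → x ^ k = (x ^ 2) ^ (k/2) := by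
    intro x hx
    rw [← Real.rpow_natCast x 2, ← Real.rpow_mul hx]
    congr 1; push_cast; ring
  rw [key _ hx, key _ hy, ← energy v v₁ ω hω]
  have h := NNReal.add_rpow_le_rpow_add (jap (vPrime v v₁ ω) ^ 2).toNNReal
    (jap (v1Prime v v₁ ω) ^ 2).toNNReal (by linarith : (1:ℝ) ≤ k/2)
  have hx2 : (0:ℝ) ≤ jap (vPrime v v₁ ω) ^ 2 := by positivity
  have hy2 : (0:ℝ) ≤ jap (v1Prime v v₁ ω) ^ 2 := by positivity
  have := NNReal.coe_le_coe.2 h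
  push_cast [NNReal.coe_rpow, Real.coe_toNNReal _ hx2, Real.coe_toNNReal _ hy2,
    ← Real.toNNReal_add hx2 hy2, Real.coe_toNNReal _ (by positivity : (0:ℝ) ≤ jap (vPrime v v₁ ω) ^ 2 + jap (v1Prime v v₁ ω) ^ 2)] at this
  exact this

/-- modified binary gain/loss decomposition: for any `k > 2` there is a constant
`C_k > 1`, depending only on `k`, such that whenever `d ≥ 2`, `b₂` is an even nonnegative angular
kernel with finite cutoff `‖b₂‖`, and `α ∈ [0, ‖b₂‖]` satisfies the Povzner-type averaging bound
of order `k`, the quantity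
`K(v,v₁) = ∫_{S^{d−1}} b₂(û·ω)(⟨v'⟩^k + ⟨v₁'⟩^k − ⟨v⟩^k − ⟨v₁⟩^k) dω`
decomposes as `K = G̃ − L̃` with
`0 ≤ G̃ ≤ α C_k ⟨v⟩⟨v₁⟩(⟨v⟩^{k−2} + ⟨v₁⟩^{k−2})` and
`L̃ ≥ (‖b₂‖ − α)(⟨v⟩^k + ⟨v₁⟩^k)` for all `v ≠ v₁`. -/
theorem binary_modified_decomposition (k : ℝ) (hk : 2 < k) :
    ∃ Ck : ℝ, 1 < Ck ∧
      ∀ (d : ℕ), 2 ≤ d →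
      ∀ (b₂ : ℝ → ℝ), Measurable b₂ →
        (∀ x ∈ Set.Icc (-1 : ℝ) 1, 0 ≤ b₂ x) →
        (∀ x ∈ Set.Icc (-1 : ℝ) 1, b₂ (-x) = b₂ x) →
      ∀ normb₂ : ℝ,
        (∀ e : EuclideanSpace ℝ (Fin d), ‖e‖ = 1 →
          (∫ ω : Metric.sphere (0 : EuclideanSpace ℝ (Fin d)) 1,
              b₂ ⟪e, (ω : EuclideanSpace ℝ (Fin d))⟫ ∂(sphereMeasure d)) = normb₂) →
        (∀ e : EuclideanSpace ℝ (Fin d), ‖e‖ = 1 →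
          Integrable (fun ω : Metric.sphere (0 : EuclideanSpace ℝ (Fin d)) 1 =>
            b₂ ⟪e, (ω : EuclideanSpace ℝ (Fin d))⟫) (sphereMeasure d)) →
      ∀ α : ℝ, α ∈ Set.Icc 0 normb₂ →
        (∀ v v₁ : EuclideanSpace ℝ (Fin d), v ≠ v₁ →
          (∫ ω : Metric.sphere (0 : EuclideanSpace ℝ (Fin d)) 1,
              b₂ ⟪‖v₁ - v‖⁻¹ • (v₁ - v), (ω : EuclideanSpace ℝ (Fin d))⟫ *
                (jap (vPrime v v₁ (ω : EuclideanSpace ℝ (Fin d))) ^ k +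
                  jap (v1Prime v v₁ (ω : EuclideanSpace ℝ (Fin d))) ^ k)
            ∂(sphereMeasure d)) ≤ α * (jap v ^ 2 + jap v₁ ^ 2) ^ (k / 2)) →
      ∃ G L : EuclideanSpace ℝ (Fin d) → EuclideanSpace ℝ (Fin d) → ℝ,
        ∀ v v₁ : EuclideanSpace ℝ (Fin d), v ≠ v₁ →
          ((∫ ω : Metric.sphere (0 : EuclideanSpace ℝ (Fin d)) 1,
              b₂ ⟪‖v₁ - v‖⁻¹ • (v₁ - v), (ω : EuclideanSpace ℝ (Fin d))⟫ *
                (jap (vPrime v v₁ (ω : EuclideanSpace ℝ (Fin d))) ^ k +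
                  jap (v1Prime v v₁ (ω : EuclideanSpace ℝ (Fin d))) ^ k -
                  jap v ^ k - jap v₁ ^ k)
            ∂(sphereMeasure d)) = G v v₁ - L v v₁) ∧
          0 ≤ G v v₁ ∧
          G v v₁ ≤ α * Ck * (jap v * jap v₁) * (jap v ^ (k - 2) + jap v₁ ^ (k - 2)) ∧
          (normb₂ - α) * (jap v ^ k + jap v₁ ^ k) ≤ L v v₁ := by
  refine ⟨(2:ℝ)^(⌈k/2⌉₊), ?_, ?_⟩
  · have hn : ⌈k/2⌉₊ ≠ 0 := by
      have : (0:ℝ) < k/2 := by linarith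
      exact (Nat.ceil_pos.mpr this).ne'
    exact one_lt_pow₀ one_lt_two hn
  intro d hd b₂ hb₂m hb₂nn hb₂even normb₂ hnorm hint α hα hPov
  set Ck : ℝ := (2:ℝ)^(⌈k/2⌉₊) with hCk
  set μ := sphereMeasure d with hμ
  set Kf : EuclideanSpace ℝ (Fin d) → EuclideanSpace ℝ (Fin d) → ℝ := fun v v₁ =>
    ∫ ω : Metric.sphere (0 : EuclideanSpace ℝ (Fin d)) 1,
        b₂ ⟪‖v₁ - v‖⁻¹ • (v₁ - v), (ω : EuclideanSpace ℝ (Fin d))⟫ *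
          (jap (vPrime v v₁ (ω : EuclideanSpace ℝ (Fin d))) ^ k +
            jap (v1Prime v v₁ (ω : EuclideanSpace ℝ (Fin d))) ^ k -
            jap v ^ k - jap v₁ ^ k) ∂μ with hKf
  refine ⟨fun v v₁ => max (Kf v v₁ + (normb₂ - α) * (jap v ^ k + jap v₁ ^ k)) 0,
    fun v v₁ => max (Kf v v₁ + (normb₂ - α) * (jap v ^ k + jap v₁ ^ k)) 0 - Kf v v₁, ?_⟩
  intro v v₁ hne
  set S : ℝ := jap v ^ k + jap v₁ ^ k with hS
  set e : EuclideanSpace ℝ (Fin d) := ‖v₁ - v‖⁻¹ • (v₁ - v) with he'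
  have hvv : v₁ - v ≠ 0 := sub_ne_zero.mpr (Ne.symm hne)
  have he : ‖e‖ = 1 := by
    rw [he', norm_smul, norm_inv, norm_norm, inv_mul_cancel₀ (norm_ne_zero_iff.mpr hvv)]
  set f : Metric.sphere (0 : EuclideanSpace ℝ (Fin d)) 1 → ℝ :=
    fun ω => b₂ ⟪e, (ω : EuclideanSpace ℝ (Fin d))⟫ with hf'
  set g : Metric.sphere (0 : EuclideanSpace ℝ (Fin d)) 1 → ℝ :=
    fun ω => jap (vPrime v v₁ (ω : EuclideanSpace ℝ (Fin d))) ^ k +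
      jap (v1Prime v v₁ (ω : EuclideanSpace ℝ (Fin d))) ^ k with hg'
  have hωnorm : ∀ ω : Metric.sphere (0 : EuclideanSpace ℝ (Fin d)) 1,
      ‖(ω : EuclideanSpace ℝ (Fin d))‖ = 1 := fun ω => by
    have := ω.2
    rwa [mem_sphere_zero_iff_norm] at this
  have hf_int : Integrable f μ := hint e he
  have hf_sum : ∫ ω, f ω ∂μ = normb₂ := hnorm e he
  have hfnn : ∀ ω, 0 ≤ f ω := by
    intro ω
    apply hb₂nn
    have h := abs_real_inner_le_norm e (ω : EuclideanSpace ℝ (Fin d))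
    rw [he, hωnorm ω, one_mul] at h
    exact abs_le.mp h
  set M0 : ℝ := (jap v ^ 2 + jap v₁ ^ 2) ^ (k/2) with hM0
  have hM0nn : 0 ≤ M0 := Real.rpow_nonneg (by positivity) _
  have hgnn : ∀ ω, 0 ≤ g ω := by
    intro ω
    have h1 : (0:ℝ) ≤ jap (vPrime v v₁ (ω : EuclideanSpace ℝ (Fin d))) :=
      le_trans zero_le_one (jap_one_le _)
    have h2 : (0:ℝ) ≤ jap (v1Prime v v₁ (ω : EuclideanSpace ℝ (Fin d))) :=
      le_trans zero_le_one (jap_one_le _)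
    exact add_nonneg (Real.rpow_nonneg h1 _) (Real.rpow_nonneg h2 _)
  have hgle : ∀ ω, g ω ≤ M0 := fun ω => pointwise_bound k hk v v₁ _ (hωnorm ω)
  have hf_meas : Measurable f := by
    apply hb₂m.comp
    have : Continuous fun ω : Metric.sphere (0 : EuclideanSpace ℝ (Fin d)) 1 =>
        ⟪e, (ω : EuclideanSpace ℝ (Fin d))⟫ := by
      exact Continuous.inner continuous_const continuous_subtype_val
    exact this.measurable
  have hg_meas : Measurable g := by
    have hc : Continuous fun ω : Metric.sphere (0 : EuclideanSpace ℝ (Fin d)) 1 =>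
        (ω : EuclideanSpace ℝ (Fin d)) := continuous_subtype_val
    have hjap : Continuous fun w : EuclideanSpace ℝ (Fin d) => jap w := by
      unfold jap; fun_prop
    have h1 : Continuous fun ω : Metric.sphere (0 : EuclideanSpace ℝ (Fin d)) 1 =>
        jap (vPrime v v₁ (ω : EuclideanSpace ℝ (Fin d))) := by
      apply hjap.comp
      unfold vPrime
      exact continuous_const.add (by fun_prop)
    have h2 : Continuous fun ω : Metric.sphere (0 : EuclideanSpace ℝ (Fin d)) 1 =>
        jap (v1Prime v v₁ (ω : EuclideanSpace ℝ (Fin d))) := by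
      apply hjap.comp
      unfold v1Prime
      exact continuous_const.sub (by fun_prop)
    rw [hg']
    have hm1 := h1.measurable
    have hm2 := h2.measurable
    fun_prop
  have hfg_int : Integrable (fun ω => f ω * g ω) μ := by
    apply Integrable.mono' (hf_int.const_mul M0) ((hf_meas.mul hg_meas).aestronglyMeasurable)
    filter_upwards with ω
    rw [Real.norm_eq_abs, Pi.mul_apply, abs_of_nonneg (mul_nonneg (hfnn ω) (hgnn ω)), mul_comm M0 (f ω)]
    exact mul_le_mul_of_nonneg_left (hgle ω) (hfnn ω)
  have hKsplit : Kf v v₁ = (∫ ω, f ω * g ω ∂μ) - normb₂ * S := by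
    have h1 : Kf v v₁ = ∫ ω, (f ω * g ω - f ω * S) ∂μ := by
      rw [hKf]
      apply integral_congr_ae
      filter_upwards with ω
      rw [hf', hg', hS]
      ring
    rw [h1, integral_sub hfg_int (hf_int.mul_const S), integral_mul_const, hf_sum, mul_comm]
  set G0 : ℝ := ∫ ω, f ω * g ω ∂μ with hG0
  have hG0nn : 0 ≤ G0 := integral_nonneg fun ω => mul_nonneg (hfnn ω) (hgnn ω)
  have hG0le : G0 ≤ α * M0 := hPov v v₁ hne
  have hkey := key_sym k hk (jap v) (jap v₁) (jap_one_le v) (jap_one_le v₁)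
  have hα0 : 0 ≤ α := hα.1
  have hαle : α ≤ normb₂ := hα.2
  have hjv : (0:ℝ) ≤ jap v := le_trans zero_le_one (jap_one_le _)
  have hjv1 : (0:ℝ) ≤ jap v₁ := le_trans zero_le_one (jap_one_le _)
  have hRHSnn : 0 ≤ α * Ck * (jap v * jap v₁) * (jap v ^ (k-2) + jap v₁ ^ (k-2)) := by
    refine mul_nonneg (mul_nonneg (mul_nonneg hα0 (by positivity)) (mul_nonneg hjv hjv1)) ?_
    exact add_nonneg (Real.rpow_nonneg hjv _) (Real.rpow_nonneg hjv1 _)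
  have hSnn : 0 ≤ S := by
    rw [hS]
    have h1 : (0:ℝ) ≤ jap v := le_trans zero_le_one (jap_one_le _)
    have h2 : (0:ℝ) ≤ jap v₁ := le_trans zero_le_one (jap_one_le _)
    exact add_nonneg (Real.rpow_nonneg h1 _) (Real.rpow_nonneg h2 _)
  refine ⟨by ring, le_max_right _ _, ?_, ?_⟩
  · -- G bound
    show max (Kf v v₁ + (normb₂ - α) * S) 0 ≤ α * Ck * (jap v * jap v₁) * (jap v ^ (k-2) + jap v₁ ^ (k-2))
    apply max_le _ hRHSnn
    have hT : Kf v v₁ + (normb₂ - α) * S = G0 - α * S := by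
      rw [hKsplit]; ring
    rw [hT]
    have hmul := mul_le_mul_of_nonneg_left hkey hα0
    have hexp : α * (jap v ^ k + jap v₁ ^ k + Ck * (jap v * jap v₁) * (jap v ^ (k-2) + jap v₁ ^ (k-2)))
        = α * (jap v ^ k) + α * (jap v₁ ^ k) + α * Ck * (jap v * jap v₁) * (jap v ^ (k-2) + jap v₁ ^ (k-2)) := by
      ring
    rw [hexp] at hmul
    have hαM0 : α * M0 = α * ((jap v ^ 2 + jap v₁ ^ 2) ^ (k/2)) := by rw [hM0]
    have hSexp : α * S = α * (jap v ^ k) + α * (jap v₁ ^ k) := by rw [hS]; ring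
    linarith [hG0le, hmul]
  · -- L bound
    have h := le_max_left (Kf v v₁ + (normb₂ - α) * S) 0
    show (normb₂ - α) * S ≤ max (Kf v v₁ + (normb₂ - α) * S) 0 - Kf v v₁
    linarith
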